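/- The group Γ₀ = ker ℓ₀ ≤ A_{G₀} is isomorphic to the double of A_L over the normal subgroup Γ_L, that is, to the amalgamated free product A_L *_{Γ_L} A_L: the pushout of two copies of the inclusion homomorphism Γ_L ↪ A_L (in Lean: Monoid.PushoutI (fun _ : Bool => (Γ_L).subtype)), where Γ_L = ker ℓ is the kernel of the length homomorphism ℓ : A_L → ℤ. -/

import Mathlib

/-- The relator set of the right-angled Artin group of a simple graph `G`:
commutators of pairs of adjacent vertices. -/
def raagRels {V : Type*} (G : SimpleGraph V) : Set (FreeGroup V) :=
  {r | ∃ u v : V, G.Adj u v ∧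
    r = FreeGroup.of u * FreeGroup.of v * (FreeGroup.of u)⁻¹ * (FreeGroup.of v)⁻¹}

/-- The right-angled Artin group of a simple graph `G`. -/
abbrev RAAG {V : Type*} (G : SimpleGraph V) : Type _ :=
  PresentedGroup (raagRels G)

/-- The image `v̄` of a vertex (generator) `v` in the right-angled Artin group. -/
def RAAG.gen {V : Type*} (G : SimpleGraph V) (v : V) : RAAG G :=
  PresentedGroup.of (rels := raagRels G) v

/-- The path graph `L` on the four vertices `u₁ = 0, u₂ = 1, u₃ = 2, u₄ = 3`,
with edges `{u₁,u₂}, {u₂,u₃}, {u₃,u₄}`. -/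
abbrev L : SimpleGraph (Fin 4) := SimpleGraph.pathGraph 4

/-- The right-angled Artin group
`A_L = ⟨u₁,u₂,u₃,u₄ ∣ [u₁,u₂] = [u₂,u₃] = [u₃,u₄] = 1⟩`. -/
abbrev A_L : Type _ := RAAG L

/-- `a = ū₂⁻¹ū₁`. -/
def elt_a : A_L := (RAAG.gen L 1)⁻¹ * RAAG.gen L 0

/-- `x = ū₂⁻¹ū₃`. -/
def elt_x : A_L := (RAAG.gen L 1)⁻¹ * RAAG.gen L 2

/-- `e = ū₃⁻¹ū₄`. -/
def elt_e : A_L := (RAAG.gen L 2)⁻¹ * RAAG.gen L 3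

/-- The homomorphism `φ : FreeGroup (Fin 3) →* A_L` with `φ g₀ = a`, `φ g₁ = x`,
`φ g₂ = e`. -/
def phi : FreeGroup (Fin 3) →* A_L := FreeGroup.lift ![elt_a, elt_x, elt_e]

/-- The graph `G₀` on six vertices `u₁ = 0, u₂ = 1, u₃ = 2, u₄ = 3, p = 4, q = 5`:
the 1-skeleton of the suspension of the path `L`.  Its edges are
`{u₁,u₂}, {u₂,u₃}, {u₃,u₄}` together with `{p,uᵢ}` and `{q,uᵢ}` for `i = 1,2,3,4`. -/
def G₀ : SimpleGraph (Fin 6) := SimpleGraph.fromRel (fun i j =>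
  (i = 0 ∧ j = 1) ∨ (i = 1 ∧ j = 2) ∨ (i = 2 ∧ j = 3) ∨
  ((i = 4 ∨ i = 5) ∧ (j = 0 ∨ j = 1 ∨ j = 2 ∨ j = 3)))

namespace Stmt11Aux

open scoped commutatorElement

instance : DecidableRel G₀.Adj := fun a b =>
  decidable_of_iff _ (SimpleGraph.fromRel_adj _ a b).symm

instance : DecidableRel L.Adj := fun a b =>
  decidable_of_iff _ (SimpleGraph.pathGraph_adj).symm

lemma raag_commute {V : Type*} (G : SimpleGraph V) {u v : V} (h : G.Adj u v) :
    Commute (RAAG.gen G u) (RAAG.gen G v) := by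
  rw [← commutatorElement_eq_one_iff_commute]
  have h1 : (PresentedGroup.mk (raagRels G))
      (FreeGroup.of u * FreeGroup.of v * (FreeGroup.of u)⁻¹ * (FreeGroup.of v)⁻¹) = 1 := by
    refine (QuotientGroup.eq_one_iff _).2 ?_
    exact Subgroup.subset_normalClosure ⟨u, v, h, rfl⟩
  simpa [commutatorElement_def, RAAG.gen, PresentedGroup.of] using h1

def emb : Fin 4 → Fin 6 := Fin.castLE (by norm_num)

lemma adj_emb {u v : Fin 4} (h : L.Adj u v) : G₀.Adj (emb u) (emb v) := by
  revert h; revert u v; decide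

/-- The natural inclusion `A_L →* RAAG G₀`. -/
def j : A_L →* RAAG G₀ :=
  PresentedGroup.toGroup (f := fun i => RAAG.gen G₀ (emb i)) (by
    rintro r ⟨u, v, huv, rfl⟩
    simp only [map_mul, map_inv, FreeGroup.lift_apply_of]
    rw [show ∀ a b : RAAG G₀, a * b * a⁻¹ * b⁻¹ = ⁅a, b⁆ from fun _ _ => rfl,
      commutatorElement_eq_one_iff_commute]
    exact raag_commute _ (adj_emb huv))

@[simp] lemma j_gen (i : Fin 4) : j (RAAG.gen L i) = RAAG.gen G₀ (emb i) :=
  PresentedGroup.toGroup.of _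

lemma j_commute (s : RAAG G₀) (hs : ∀ i : Fin 4, Commute (RAAG.gen G₀ (emb i)) s)
    (g : A_L) : Commute (j g) s := by
  induction g using PresentedGroup.induction_on with
  | H z =>
    refine FreeGroup.induction_on
      (C := fun z => Commute (j (PresentedGroup.mk (raagRels L) z)) s) z ?_ ?_ ?_ ?_
    · simpa using Commute.one_left s
    · intro x; show Commute (j (RAAG.gen L x)) s; rw [j_gen]; exact hs x
    · intro x hx
      rw [map_inv, map_inv]
      exact hx.inv_left
    · intro x y hx hy
      rw [map_mul, map_mul]
      exact hx.mul_left hy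

lemma j_comm_p (g : A_L) : Commute (j g) (RAAG.gen G₀ 4) :=
  j_commute _ (fun i => by
    have : G₀.Adj (emb i) 4 := by revert i; decide
    exact raag_commute _ this) g

lemma j_comm_q (g : A_L) : Commute (j g) (RAAG.gen G₀ 5) :=
  j_commute _ (fun i => by
    have : G₀.Adj (emb i) 5 := by revert i; decide
    exact raag_commute _ this) g

section
open Monoid

variable (ℓ : A_L →* Multiplicative ℤ)

/-- The pushout (double) `A_L *_{Γ_L} A_L`. -/
abbrev P : Type _ := Monoid.PushoutI (fun _ : Bool => (ℓ.ker).subtype)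

/-- The two canonical maps `A_L →* P`. -/
abbrev ι (b : Bool) : A_L →* P ℓ := Monoid.PushoutI.of (φ := fun _ : Bool => (ℓ.ker).subtype) b

lemma of_ker_base {g : A_L} (hg : ℓ g = 1) (b : Bool) :
    ι ℓ b g = Monoid.PushoutI.base _ (⟨g, MonoidHom.mem_ker.2 hg⟩ : ℓ.ker) := by
  have := DFunLike.congr_fun
    (Monoid.PushoutI.of_comp_eq_base (φ := fun _ : Bool => (ℓ.ker).subtype) b)
    (⟨g, MonoidHom.mem_ker.2 hg⟩ : ℓ.ker)
  simpa using this

lemma of_ker {g : A_L} (hg : ℓ g = 1) (b b' : Bool) : ι ℓ b g = ι ℓ b' g := by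
  rw [of_ker_base ℓ hg, of_ker_base ℓ hg]

/-- `a = ū₁`, an element of length `1`. -/
noncomputable def aelt : A_L := RAAG.gen L 0

variable (hℓ : ∀ i : Fin 4, ℓ (RAAG.gen L i) = Multiplicative.ofAdd 1)

/-- The `true` component of the twisting endomorphism. -/
noncomputable def βf : A_L →* P ℓ :=
  (MulAut.conj ((ι ℓ false aelt)⁻¹)).toMonoidHom.comp
    ((ι ℓ true).comp (MulAut.conj aelt).toMonoidHom)

lemma βf_apply (g : A_L) :
    βf ℓ g = (ι ℓ false aelt)⁻¹ * ι ℓ true (aelt * g * aelt⁻¹) * ι ℓ false aelt := by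
  simp [βf, MulAut.conj_apply, mul_assoc]

/-- The inverse `true` component. -/
noncomputable def βf' : A_L →* P ℓ :=
  (MulAut.conj (ι ℓ false aelt)).toMonoidHom.comp
    ((ι ℓ true).comp (MulAut.conj aelt⁻¹).toMonoidHom)

lemma βf'_apply (g : A_L) :
    βf' ℓ g = ι ℓ false aelt * ι ℓ true (aelt⁻¹ * g * aelt) * (ι ℓ false aelt)⁻¹ := by
  simp [βf', MulAut.conj_apply, mul_assoc]

include hℓ

lemma βf_comp : (βf ℓ).comp (ℓ.ker).subtype = Monoid.PushoutI.base _ := by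
  ext ⟨g, hg⟩
  have hg' : ℓ g = 1 := MonoidHom.mem_ker.1 hg
  have h1 : ℓ (aelt * g * aelt⁻¹) = 1 := by
    simp [map_mul, map_inv, hg', mul_comm]
  simp only [MonoidHom.comp_apply, Subgroup.coe_subtype, βf_apply]
  rw [of_ker ℓ h1 true false, ← map_inv (ι ℓ false), ← map_mul, ← map_mul]
  rw [show aelt⁻¹ * (aelt * g * aelt⁻¹) * aelt = g by group]
  exact of_ker_base ℓ hg' false

lemma βf'_comp : (βf' ℓ).comp (ℓ.ker).subtype = Monoid.PushoutI.base _ := by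
  ext ⟨g, hg⟩
  have hg' : ℓ g = 1 := MonoidHom.mem_ker.1 hg
  have h1 : ℓ (aelt⁻¹ * g * aelt) = 1 := by
    simp [map_mul, map_inv, hg', mul_comm]
  simp only [MonoidHom.comp_apply, Subgroup.coe_subtype, βf'_apply]
  rw [of_ker ℓ h1 true false, ← map_inv (ι ℓ false), ← map_mul, ← map_mul]
  rw [show aelt * (aelt⁻¹ * g * aelt) * aelt⁻¹ = g by group]
  exact of_ker_base ℓ hg' false

/-- The twisting endomorphism `β` of `P`. -/
noncomputable def β : P ℓ →* P ℓ :=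
  Monoid.PushoutI.lift (fun b => match b with | false => ι ℓ false | true => βf ℓ)
    (Monoid.PushoutI.base _)
    (fun b => by
      cases b
      · exact Monoid.PushoutI.of_comp_eq_base false
      · exact βf_comp ℓ hℓ)

noncomputable def β' : P ℓ →* P ℓ :=
  Monoid.PushoutI.lift (fun b => match b with | false => ι ℓ false | true => βf' ℓ)
    (Monoid.PushoutI.base _)
    (fun b => by
      cases b
      · exact Monoid.PushoutI.of_comp_eq_base false
      · exact βf'_comp ℓ hℓ)

@[simp] lemma β_false (g : A_L) : β ℓ hℓ (ι ℓ false g) = ι ℓ false g :=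
  Monoid.PushoutI.lift_of _ _ _ _

@[simp] lemma β_true (g : A_L) :
    β ℓ hℓ (ι ℓ true g) = (ι ℓ false aelt)⁻¹ * ι ℓ true (aelt * g * aelt⁻¹) * ι ℓ false aelt := by
  rw [show β ℓ hℓ (ι ℓ true g) = βf ℓ g from Monoid.PushoutI.lift_of _ _ _ _, βf_apply]

@[simp] lemma β'_false (g : A_L) : β' ℓ hℓ (ι ℓ false g) = ι ℓ false g :=
  Monoid.PushoutI.lift_of _ _ _ _

@[simp] lemma β'_true (g : A_L) :
    β' ℓ hℓ (ι ℓ true g) = ι ℓ false aelt * ι ℓ true (aelt⁻¹ * g * aelt) * (ι ℓ false aelt)⁻¹ := by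
  rw [show β' ℓ hℓ (ι ℓ true g) = βf' ℓ g from Monoid.PushoutI.lift_of _ _ _ _, βf'_apply]

lemma β'_β : (β' ℓ hℓ).comp (β ℓ hℓ) = MonoidHom.id _ := by
  refine Monoid.PushoutI.hom_ext_nonempty (fun b => ?_)
  cases b
  · refine MonoidHom.ext fun g => ?_
    simp [MonoidHom.comp_apply]
  · refine MonoidHom.ext fun g => ?_
    simp only [MonoidHom.comp_apply, MonoidHom.id_apply, β_true, map_mul, map_inv,
      β'_false, β'_true]
    group

lemma β_β' : (β ℓ hℓ).comp (β' ℓ hℓ) = MonoidHom.id _ := by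
  refine Monoid.PushoutI.hom_ext_nonempty (fun b => ?_)
  cases b
  · refine MonoidHom.ext fun g => ?_
    simp [MonoidHom.comp_apply]
  · refine MonoidHom.ext fun g => ?_
    simp only [MonoidHom.comp_apply, MonoidHom.id_apply, β'_true, map_mul, map_inv,
      β_false, β_true]
    group

/-- `β` as an automorphism of `P`. -/
noncomputable def βAut : MulAut (P ℓ) :=
  MonoidHom.toMulEquiv (β ℓ hℓ) (β' ℓ hℓ) (β'_β ℓ hℓ) (β_β' ℓ hℓ)

end

section
open Monoid

variable (ℓ : A_L →* Multiplicative ℤ)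
variable (hℓ : ∀ i : Fin 4, ℓ (RAAG.gen L i) = Multiplicative.ofAdd 1)

/-- The distinguished generator of `ℤ`. -/
def tZ : Multiplicative ℤ := Multiplicative.ofAdd 1

/-- The action of `ℤ` on `P` generated by `βAut`. -/
noncomputable def φβ : Multiplicative ℤ →* MulAut (P ℓ) := zpowersHom _ (βAut ℓ hℓ)

/-- The semidirect product `P ⋊ ℤ`. -/
abbrev SDP : Type _ := (P ℓ) ⋊[φβ ℓ hℓ] Multiplicative ℤ

lemma βAut_apply (x : P ℓ) : βAut ℓ hℓ x = β ℓ hℓ x := rfl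

lemma βAut_symm_apply (x : P ℓ) : (βAut ℓ hℓ).symm x = β' ℓ hℓ x := rfl

lemma φβ_t : φβ ℓ hℓ tZ = βAut ℓ hℓ := by
  simp [φβ, tZ, zpowersHom_apply]

/-- The element `q̄p̄⁻¹`-analogue in `P`: `c = (ι_t a)⁻¹ (ι_f a)`. -/
noncomputable def celt : P ℓ := (ι ℓ true aelt)⁻¹ * ι ℓ false aelt

lemma sdp_c {x y : P ℓ} (h : x * β ℓ hℓ y = y * β ℓ hℓ x) :
    Commute (⟨x, tZ⟩ : SDP ℓ hℓ) ⟨y, tZ⟩ := by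
  show _ = _
  refine SemidirectProduct.ext ?_ rfl
  rw [SemidirectProduct.mul_left, SemidirectProduct.mul_left]
  show x * (φβ ℓ hℓ tZ) y = y * (φβ ℓ hℓ tZ) x
  rw [φβ_t, βAut_apply, βAut_apply, h]

lemma β_celt : β ℓ hℓ (celt ℓ) =
    (ι ℓ false aelt)⁻¹ * (ι ℓ true aelt)⁻¹ * ι ℓ false aelt * ι ℓ false aelt := by
  simp only [celt, map_mul, map_inv, β_true, β_false, map_mul, map_inv]
  group

lemma comm_c (g : A_L) (hg : ℓ g = Multiplicative.ofAdd 1) :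
    celt ℓ * β ℓ hℓ (ι ℓ false g) = ι ℓ false g * β ℓ hℓ (celt ℓ) := by
  have hA : ℓ aelt = Multiplicative.ofAdd 1 := hℓ 0
  have h1 : ℓ (g * aelt⁻¹) = 1 := by
    simp only [map_mul, map_inv, hg, hA]
    decide
  have h2 : ℓ (aelt * g * aelt⁻¹ * aelt⁻¹) = 1 := by
    simp only [map_mul, map_inv, hg, hA]
    decide
  have e1 : ι ℓ false (g * aelt⁻¹) = ι ℓ true (g * aelt⁻¹) := of_ker ℓ h1 _ _
  have e2 : ι ℓ true (aelt * g * aelt⁻¹ * aelt⁻¹) =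
      ι ℓ false (aelt * g * aelt⁻¹ * aelt⁻¹) := of_ker ℓ h2 _ _
  simp only [map_mul, map_inv] at e1 e2
  set fA := ι ℓ false aelt with hfA
  set tA := ι ℓ true aelt with htA
  set fg := ι ℓ false g with hfg
  set tg := ι ℓ true g with htg
  have E' : fA * fg * fA⁻¹ * fA⁻¹ = tA * fg * fA⁻¹ * tA⁻¹ := by
    calc fA * fg * fA⁻¹ * fA⁻¹ = tA * tg * tA⁻¹ * tA⁻¹ := e2.symm
      _ = tA * (tg * tA⁻¹) * tA⁻¹ := by group
      _ = tA * (fg * fA⁻¹) * tA⁻¹ := by rw [← e1]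
      _ = tA * fg * fA⁻¹ * tA⁻¹ := by group
  rw [β_false, β_celt]
  calc celt ℓ * fg = tA⁻¹ * fA * fg := by rw [celt]
    _ = tA⁻¹ * (fA * fg * fA⁻¹ * fA⁻¹) * (fA * fA) := by group
    _ = tA⁻¹ * (tA * fg * fA⁻¹ * tA⁻¹) * (fA * fA) := by rw [E']
    _ = fg * (fA⁻¹ * tA⁻¹ * fA * fA) := by group

/-- Left components of the images of the six generators. -/
noncomputable def θx : Fin 6 → P ℓ := fun i => match i with
  | 0 => ι ℓ false (RAAG.gen L 0)
  | 1 => ι ℓ false (RAAG.gen L 1)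
  | 2 => ι ℓ false (RAAG.gen L 2)
  | 3 => ι ℓ false (RAAG.gen L 3)
  | 4 => 1
  | 5 => celt ℓ

lemma θx_emb (i : Fin 4) : θx ℓ (emb i) = ι ℓ false (RAAG.gen L i) := by
  fin_cases i <;> rfl

/-- Images of the six generators in `SDP`. -/
noncomputable def θf : Fin 6 → SDP ℓ hℓ := fun i => ⟨θx ℓ i, tZ⟩

include hℓ in
lemma commE (i j : Fin 4) (h : L.Adj i j) :
    Commute (θf ℓ hℓ (emb i)) (θf ℓ hℓ (emb j)) := by
  apply sdp_c ℓ hℓ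
  rw [θx_emb, θx_emb, β_false, β_false]
  exact ((raag_commute L h).map (ι ℓ false)).eq

include hℓ in
lemma commP (i : Fin 4) : Commute (θf ℓ hℓ 4) (θf ℓ hℓ (emb i)) := by
  apply sdp_c ℓ hℓ
  have h4 : θx ℓ 4 = 1 := rfl
  rw [θx_emb, h4, map_one, one_mul, mul_one, β_false]

include hℓ in
lemma commQ (i : Fin 4) : Commute (θf ℓ hℓ 5) (θf ℓ hℓ (emb i)) := by
  apply sdp_c ℓ hℓ
  have h5 : θx ℓ 5 = celt ℓ := rfl
  rw [θx_emb, h5]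
  exact comm_c ℓ hℓ _ (hℓ i)

include hℓ in
lemma comm6 (u v : Fin 6) (huv : G₀.Adj u v) : Commute (θf ℓ hℓ u) (θf ℓ hℓ v) := by
  fin_cases u <;> fin_cases v <;>
    first
    | exact absurd huv (by decide)
    | exact commE ℓ hℓ 0 1 (by decide)
    | exact commE ℓ hℓ 1 0 (by decide)
    | exact commE ℓ hℓ 1 2 (by decide)
    | exact commE ℓ hℓ 2 1 (by decide)
    | exact commE ℓ hℓ 2 3 (by decide)
    | exact commE ℓ hℓ 3 2 (by decide)
    | exact commP ℓ hℓ 0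
    | exact (commP ℓ hℓ 0).symm
    | exact commQ ℓ hℓ 0
    | exact (commQ ℓ hℓ 0).symm
    | exact commP ℓ hℓ 1
    | exact (commP ℓ hℓ 1).symm
    | exact commQ ℓ hℓ 1
    | exact (commQ ℓ hℓ 1).symm
    | exact commP ℓ hℓ 2
    | exact (commP ℓ hℓ 2).symm
    | exact commQ ℓ hℓ 2
    | exact (commQ ℓ hℓ 2).symm
    | exact commP ℓ hℓ 3
    | exact (commP ℓ hℓ 3).symm
    | exact commQ ℓ hℓ 3
    | exact (commQ ℓ hℓ 3).symm

/-- The homomorphism `Θ : RAAG G₀ →* P ⋊ ℤ`. -/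
noncomputable def Θ : RAAG G₀ →* SDP ℓ hℓ :=
  PresentedGroup.toGroup (f := θf ℓ hℓ) (by
    rintro r ⟨u, v, huv, rfl⟩
    simp only [map_mul, map_inv, FreeGroup.lift_apply_of]
    rw [show ∀ a b : SDP ℓ hℓ, a * b * a⁻¹ * b⁻¹ = ⁅a,b⁆ from fun _ _ => rfl,
      commutatorElement_eq_one_iff_commute]
    exact comm6 ℓ hℓ u v huv)

@[simp] lemma Θ_gen (i : Fin 6) : Θ ℓ hℓ (RAAG.gen G₀ i) = θf ℓ hℓ i :=
  PresentedGroup.toGroup.of _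

end

section
open Monoid

variable (ℓ : A_L →* Multiplicative ℤ)
variable (hℓ : ∀ i : Fin 4, ℓ (RAAG.gen L i) = Multiplicative.ofAdd 1)
variable (ℓ₀ : RAAG G₀ →* Multiplicative ℤ)
variable (hℓ₀ : ∀ i : Fin 6, ℓ₀ (RAAG.gen G₀ i) = Multiplicative.ofAdd 1)

/-- `p` and `q` as elements of `RAAG G₀`. -/
noncomputable def sel : Bool → RAAG G₀ := fun b => match b with
  | false => RAAG.gen G₀ 4
  | true => RAAG.gen G₀ 5

lemma j_comm_sel (b : Bool) (g : A_L) : Commute (j g) (sel b) := by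
  cases b
  · exact j_comm_p g
  · exact j_comm_q g

/-- Powers of `p` resp. `q`. -/
noncomputable def ζ (b : Bool) : Multiplicative ℤ →* RAAG G₀ := zpowersHom _ (sel b)

lemma j_comm_ζ (b : Bool) (g : A_L) (m : Multiplicative ℤ) : Commute (j g) (ζ b m) := by
  rw [ζ, zpowersHom_apply]
  exact (j_comm_sel b g).zpow_right _

lemma ζ_comm_ζ (b : Bool) (m m' : Multiplicative ℤ) : Commute (ζ b m) (ζ b m') := by
  rw [ζ, zpowersHom_apply, zpowersHom_apply]
  exact (Commute.refl _).zpow_zpow _ _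

lemma ζ_one (b : Bool) : ζ b (Multiplicative.ofAdd 1) = sel b := by
  rw [ζ, zpowersHom_apply, toAdd_ofAdd, zpow_one]

/-- The components `ψ b : A_L →* RAAG G₀`, `g ↦ j(g)·s_b^{-ℓ(g)}`. -/
noncomputable def ψ (b : Bool) : A_L →* RAAG G₀ :=
  MonoidHom.mk' (fun g => j g * (ζ b (ℓ g))⁻¹) (by
    intro g h
    have h1 : Commute (j h) ((ζ b (ℓ g))⁻¹) := (j_comm_ζ b h (ℓ g)).inv_right
    have h2 : Commute ((ζ b (ℓ h))⁻¹) ((ζ b (ℓ g))⁻¹) :=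
      ((ζ_comm_ζ b (ℓ h) (ℓ g)).inv_left).inv_right
    calc j (g * h) * (ζ b (ℓ (g * h)))⁻¹
        = j g * j h * ((ζ b (ℓ h))⁻¹ * (ζ b (ℓ g))⁻¹) := by
          rw [map_mul, map_mul, map_mul, mul_inv_rev]
      _ = j g * j h * ((ζ b (ℓ g))⁻¹ * (ζ b (ℓ h))⁻¹) := by rw [h2.eq]
      _ = j g * (j h * (ζ b (ℓ g))⁻¹) * (ζ b (ℓ h))⁻¹ := by group
      _ = j g * ((ζ b (ℓ g))⁻¹ * j h) * (ζ b (ℓ h))⁻¹ := by rw [h1.eq]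
      _ = j g * (ζ b (ℓ g))⁻¹ * (j h * (ζ b (ℓ h))⁻¹) := by group)

lemma ψ_apply (b : Bool) (g : A_L) : ψ ℓ b g = j g * (ζ b (ℓ g))⁻¹ := rfl

include hℓ in
lemma ψ_gen (b : Bool) (i : Fin 4) :
    ψ ℓ b (RAAG.gen L i) = RAAG.gen G₀ (emb i) * (sel b)⁻¹ := by
  rw [ψ_apply, hℓ i, ζ_one, j_gen]

/-- The homomorphism `F : P →* RAAG G₀`. -/
noncomputable def F : P ℓ →* RAAG G₀ :=
  Monoid.PushoutI.lift (fun b => ψ ℓ b) (j.comp (ℓ.ker).subtype) (fun b => by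
    ext ⟨g, hg⟩
    have hg' : ℓ g = 1 := MonoidHom.mem_ker.1 hg
    simp [ψ_apply, hg'])

@[simp] lemma F_ι (b : Bool) (g : A_L) : F ℓ (ι ℓ b g) = ψ ℓ b g :=
  Monoid.PushoutI.lift_of _ _ _ _

include hℓ hℓ₀ in
lemma l0_j (g : A_L) : ℓ₀ (j g) = ℓ g := by
  have : ℓ₀.comp j = ℓ := by
    ext i
    rw [MonoidHom.comp_apply, show PresentedGroup.of i = RAAG.gen L i from rfl, j_gen,
      hℓ₀ (emb i), hℓ i]
  rw [← this, MonoidHom.comp_apply]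

include hℓ₀ in
lemma l0_sel (b : Bool) : ℓ₀ (sel b) = Multiplicative.ofAdd 1 := by
  cases b
  · exact hℓ₀ 4
  · exact hℓ₀ 5

include hℓ₀ in
lemma l0_ζ (b : Bool) (m : Multiplicative ℤ) : ℓ₀ (ζ b m) = m := by
  rw [ζ, zpowersHom_apply, map_zpow, l0_sel ℓ₀ hℓ₀ b, ← ofAdd_zsmul, smul_eq_mul, mul_one,
    ofAdd_toAdd]

include hℓ hℓ₀ in
lemma l0_F (x : P ℓ) : ℓ₀ (F ℓ x) = 1 := by
  have : ℓ₀.comp (F ℓ) = 1 := by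
    refine Monoid.PushoutI.hom_ext_nonempty fun b => ?_
    ext i
    rw [MonoidHom.comp_apply, MonoidHom.comp_apply,
      show Monoid.PushoutI.of b (PresentedGroup.of i) = ι ℓ b (RAAG.gen L i) from rfl, F_ι,
      ψ_apply, map_mul, map_inv, l0_j ℓ hℓ ℓ₀ hℓ₀, l0_ζ ℓ₀ hℓ₀]
    simp
  rw [← MonoidHom.comp_apply, this, MonoidHom.one_apply]

/-- `F` corestricted to the kernel of `ℓ₀`. -/
noncomputable def F' : P ℓ →* ℓ₀.ker :=
  (F ℓ).codRestrict ℓ₀.ker (fun x => MonoidHom.mem_ker.2 (l0_F ℓ hℓ ℓ₀ hℓ₀ x))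

@[simp] lemma F'_coe (x : P ℓ) : (F' ℓ hℓ ℓ₀ hℓ₀ x : RAAG G₀) = F ℓ x := rfl


include hℓ₀ in
lemma rh_Θ (x : RAAG G₀) : (Θ ℓ hℓ x).right = ℓ₀ x := by
  have : (SemidirectProduct.rightHom).comp (Θ ℓ hℓ) = ℓ₀ := by
    ext i
    rw [MonoidHom.comp_apply, show PresentedGroup.of i = RAAG.gen G₀ i from rfl, Θ_gen,
      hℓ₀ i]
    rfl
  rw [← this, MonoidHom.comp_apply, SemidirectProduct.rightHom_eq_right]

/-- The homomorphism `π : ker ℓ₀ →* P`. -/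
noncomputable def π : ℓ₀.ker →* P ℓ :=
  MonoidHom.mk' (fun x => (Θ ℓ hℓ (x : RAAG G₀)).left) (by
    intro x y
    have hx : (Θ ℓ hℓ (x : RAAG G₀)).right = 1 := by
      rw [rh_Θ ℓ hℓ ℓ₀ hℓ₀]
      exact MonoidHom.mem_ker.1 x.2
    show (Θ ℓ hℓ ((x : RAAG G₀) * (y : RAAG G₀))).left =
      (Θ ℓ hℓ (x : RAAG G₀)).left * (Θ ℓ hℓ (y : RAAG G₀)).left
    rw [map_mul, SemidirectProduct.mul_left, hx, map_one, MulAut.one_apply])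

lemma π_apply (x : ℓ₀.ker) : π ℓ hℓ ℓ₀ hℓ₀ x = (Θ ℓ hℓ (x : RAAG G₀)).left := rfl

lemma sdp_mul_inv_left (x c : P ℓ) :
    ((⟨x, tZ⟩ : SDP ℓ hℓ) * (⟨c, tZ⟩ : SDP ℓ hℓ)⁻¹).left = x * c⁻¹ := by
  rw [SemidirectProduct.mul_left, SemidirectProduct.inv_left]
  show x * (φβ ℓ hℓ tZ) ((φβ ℓ hℓ tZ⁻¹) c⁻¹) = x * c⁻¹
  rw [← MulAut.mul_apply, ← map_mul, mul_inv_cancel, map_one, MulAut.one_apply]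

include hℓ₀ in
lemma π_F'_gen (b : Bool) (i : Fin 4) :
    π ℓ hℓ ℓ₀ hℓ₀ (F' ℓ hℓ ℓ₀ hℓ₀ (ι ℓ b (RAAG.gen L i))) = ι ℓ b (RAAG.gen L i) := by
  have hFv : (F' ℓ hℓ ℓ₀ hℓ₀ (ι ℓ b (RAAG.gen L i)) : RAAG G₀) =
      RAAG.gen G₀ (emb i) * (sel b)⁻¹ := by
    rw [F'_coe, F_ι, ψ_gen ℓ hℓ]
  rw [π_apply, hFv, map_mul, map_inv,
    show Θ ℓ hℓ (RAAG.gen G₀ (emb i)) = θf ℓ hℓ (emb i) from Θ_gen ℓ hℓ (emb i)]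
  have hΘs : Θ ℓ hℓ (sel b) = (⟨θx ℓ (if b then 5 else 4), tZ⟩ : SDP ℓ hℓ) := by
    cases b
    · exact Θ_gen ℓ hℓ 4
    · exact Θ_gen ℓ hℓ 5
  rw [hΘs, show θf ℓ hℓ (emb i) = (⟨θx ℓ (emb i), tZ⟩ : SDP ℓ hℓ) from rfl,
    sdp_mul_inv_left, θx_emb]
  cases b
  · show ι ℓ false (RAAG.gen L i) * (1 : P ℓ)⁻¹ = _
    rw [inv_one, mul_one]
  · show ι ℓ false (RAAG.gen L i) * (celt ℓ)⁻¹ = ι ℓ true (RAAG.gen L i)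
    rw [celt, mul_inv_rev, inv_inv]
    have hA : ℓ aelt = Multiplicative.ofAdd 1 := hℓ 0
    have h1 : ℓ (RAAG.gen L i * aelt⁻¹) = 1 := by
      simp only [map_mul, map_inv, hℓ i, hA]
      decide
    calc ι ℓ false (RAAG.gen L i) * ((ι ℓ false aelt)⁻¹ * ι ℓ true aelt)
        = ι ℓ false (RAAG.gen L i * aelt⁻¹) * ι ℓ true aelt := by
          rw [map_mul, map_inv]; group
      _ = ι ℓ true (RAAG.gen L i * aelt⁻¹) * ι ℓ true aelt := by rw [of_ker ℓ h1 false true]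
      _ = ι ℓ true (RAAG.gen L i) := by rw [← map_mul, inv_mul_cancel_right]

include hℓ₀ in
lemma π_F' (y : P ℓ) : π ℓ hℓ ℓ₀ hℓ₀ (F' ℓ hℓ ℓ₀ hℓ₀ y) = y := by
  have : (π ℓ hℓ ℓ₀ hℓ₀).comp (F' ℓ hℓ ℓ₀ hℓ₀) = MonoidHom.id _ := by
    refine Monoid.PushoutI.hom_ext_nonempty fun b => ?_
    ext i
    simp only [MonoidHom.comp_apply, MonoidHom.id_apply]
    rw [show Monoid.PushoutI.of b (PresentedGroup.of i) = ι ℓ b (RAAG.gen L i) from rfl]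
    exact π_F'_gen ℓ hℓ ℓ₀ hℓ₀ b i
  rw [← MonoidHom.comp_apply, this, MonoidHom.id_apply]


lemma word1 {G : Type*} [Group G] (jA w p q : G) (cq : q⁻¹ * jA = jA * q⁻¹) :
    (jA * p⁻¹)⁻¹ * (jA * w * jA⁻¹ * q⁻¹) * (jA * p⁻¹) = p * (w * q⁻¹) * p⁻¹ := by
  calc (jA * p⁻¹)⁻¹ * (jA * w * jA⁻¹ * q⁻¹) * (jA * p⁻¹)
      = p * w * (jA⁻¹ * (q⁻¹ * jA)) * p⁻¹ := by group
    _ = p * w * (jA⁻¹ * (jA * q⁻¹)) * p⁻¹ := by rw [cq]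
    _ = p * (w * q⁻¹) * p⁻¹ := by group

include hℓ in
lemma F_β_hom : (F ℓ).comp (β ℓ hℓ) =
    (MulAut.conj (sel false)).toMonoidHom.comp (F ℓ) := by
  refine Monoid.PushoutI.hom_ext_nonempty fun b => ?_
  cases b
  · refine MonoidHom.ext fun g => ?_
    simp only [MonoidHom.comp_apply, MulEquiv.coe_toMonoidHom, MulAut.conj_apply]
    rw [show (Monoid.PushoutI.of false g : P ℓ) = ι ℓ false g from rfl, β_false, F_ι]
    have hc : Commute (sel false) (ψ ℓ false g) := by
      refine Commute.mul_right (j_comm_sel false g).symm ?_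
      rw [ζ, zpowersHom_apply]
      exact (((Commute.refl (sel false)).zpow_right _).inv_right)
    rw [hc.eq, mul_inv_cancel_right]
  · ext i
    simp only [MonoidHom.comp_apply, MulEquiv.coe_toMonoidHom, MulAut.conj_apply]
    rw [show (Monoid.PushoutI.of true (PresentedGroup.of i) : P ℓ) =
      ι ℓ true (RAAG.gen L i) from rfl, β_true]
    have hA : ℓ aelt = Multiplicative.ofAdd 1 := hℓ 0
    have harg : ℓ (aelt * RAAG.gen L i * aelt⁻¹) = Multiplicative.ofAdd 1 := by
      simp only [map_mul, map_inv, hA, hℓ i]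
      decide
    rw [map_mul, map_mul, map_inv, F_ι, F_ι, F_ι, ψ_apply, ψ_apply, ψ_apply,
      hA, harg, hℓ i, ζ_one, ζ_one, map_mul, map_mul, map_inv]
    exact word1 (j aelt) (j (RAAG.gen L i)) (sel false) (sel true)
      ((j_comm_sel true aelt).inv_right.symm.eq)

include hℓ in
lemma F_β (x : P ℓ) : F ℓ (β ℓ hℓ x) = sel false * F ℓ x * (sel false)⁻¹ := by
  have := DFunLike.congr_fun (F_β_hom ℓ hℓ) x
  simpa [MulAut.conj_apply] using this

include hℓ in
lemma F_βinv (x : P ℓ) :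
    F ℓ ((βAut ℓ hℓ)⁻¹ x) = (sel false)⁻¹ * F ℓ x * sel false := by
  have h1 : β ℓ hℓ ((βAut ℓ hℓ)⁻¹ x) = x := by
    have : (βAut ℓ hℓ)⁻¹ x = β' ℓ hℓ x := rfl
    rw [this]
    exact DFunLike.congr_fun (β_β' ℓ hℓ) x
  have h2 := F_β ℓ hℓ ((βAut ℓ hℓ)⁻¹ x)
  rw [h1] at h2
  rw [h2]
  group

include hℓ in
lemma F_βz (n : ℤ) : ∀ x : P ℓ,
    F ℓ (((βAut ℓ hℓ) ^ n) x) = (sel false) ^ n * F ℓ x * ((sel false) ^ n)⁻¹ := by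
  induction n using Int.induction_on with
  | zero => intro x; simp
  | succ n ih =>
      intro x
      have hstep : ((βAut ℓ hℓ) ^ ((n : ℤ) + 1)) x = ((βAut ℓ hℓ) ^ (n : ℤ)) (β ℓ hℓ x) := by
        rw [zpow_add_one]
        rfl
      rw [hstep, ih, F_β ℓ hℓ x]
      group
  | pred n ih =>
      intro x
      have hstep : ((βAut ℓ hℓ) ^ (-(n : ℤ) - 1)) x =
          ((βAut ℓ hℓ) ^ (-(n : ℤ))) ((βAut ℓ hℓ)⁻¹ x) := by
        rw [zpow_sub_one]
        rfl
      rw [hstep, ih, F_βinv ℓ hℓ x]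
      group

/-- The homomorphism `H : P ⋊ ℤ →* RAAG G₀`. -/
noncomputable def H : SDP ℓ hℓ →* RAAG G₀ :=
  SemidirectProduct.lift (F ℓ) (zpowersHom _ (sel false)) (fun m => by
    refine MonoidHom.ext fun x => ?_
    simp only [MonoidHom.comp_apply, MulEquiv.coe_toMonoidHom, MulAut.conj_apply,
      zpowersHom_apply]
    rw [show φβ ℓ hℓ m = (βAut ℓ hℓ) ^ (Multiplicative.toAdd m) from zpowersHom_apply _ _ _]
    exact F_βz ℓ hℓ _ x)

lemma H_inl (x : P ℓ) : H ℓ hℓ (SemidirectProduct.inl x) = F ℓ x :=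
  SemidirectProduct.lift_inl _ _ _ _

lemma H_inr (m : Multiplicative ℤ) :
    H ℓ hℓ (SemidirectProduct.inr m) = sel false ^ (Multiplicative.toAdd m) :=
  SemidirectProduct.lift_inr _ _ _ _

include hℓ₀ in
lemma H_Θ : (H ℓ hℓ).comp (Θ ℓ hℓ) = MonoidHom.id _ := by
  ext i
  rw [MonoidHom.comp_apply, MonoidHom.id_apply,
    show PresentedGroup.of i = RAAG.gen G₀ i from rfl, Θ_gen]
  have hmk : θf ℓ hℓ i = SemidirectProduct.inl (θx ℓ i) * SemidirectProduct.inr tZ :=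
    SemidirectProduct.mk_eq_inl_mul_inr _ _
  rw [hmk, map_mul, H_inl, H_inr, show Multiplicative.toAdd tZ = 1 from rfl, zpow_one]
  fin_cases i <;> simp only [θx]
  · rw [F_ι, ψ_gen ℓ hℓ, inv_mul_cancel_right]; rfl
  · rw [F_ι, ψ_gen ℓ hℓ, inv_mul_cancel_right]; rfl
  · rw [F_ι, ψ_gen ℓ hℓ, inv_mul_cancel_right]; rfl
  · rw [F_ι, ψ_gen ℓ hℓ, inv_mul_cancel_right]; rfl
  · rw [map_one, one_mul]; rfl
  · have hA : ℓ aelt = Multiplicative.ofAdd 1 := hℓ 0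
    rw [celt, map_mul, map_inv, F_ι, F_ι,
      ψ_apply, ψ_apply, hA, ζ_one, ζ_one]
    have : (j aelt * (sel true)⁻¹)⁻¹ * (j aelt * (sel false)⁻¹) * sel false = sel true := by
      group
    rw [this]; rfl

include hℓ₀ in
lemma F'_π (x : ℓ₀.ker) : F' ℓ hℓ ℓ₀ hℓ₀ (π ℓ hℓ ℓ₀ hℓ₀ x) = x := by
  apply Subtype.ext
  rw [F'_coe, π_apply]
  have hr : (Θ ℓ hℓ (x : RAAG G₀)).right = 1 := by
    rw [rh_Θ ℓ hℓ ℓ₀ hℓ₀]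
    exact MonoidHom.mem_ker.1 x.2
  have hx : SemidirectProduct.inl ((Θ ℓ hℓ (x : RAAG G₀)).left) = Θ ℓ hℓ (x : RAAG G₀) := by
    have h := SemidirectProduct.inl_left_mul_inr_right (Θ ℓ hℓ (x : RAAG G₀))
    rw [hr, map_one, mul_one] at h
    exact h
  calc F ℓ ((Θ ℓ hℓ (x : RAAG G₀)).left)
      = H ℓ hℓ (SemidirectProduct.inl ((Θ ℓ hℓ (x : RAAG G₀)).left)) :=
        (H_inl ℓ hℓ _).symm
    _ = H ℓ hℓ (Θ ℓ hℓ (x : RAAG G₀)) := by rw [hx]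
    _ = (x : RAAG G₀) := by
        have := DFunLike.congr_fun (H_Θ ℓ hℓ ℓ₀ hℓ₀) (x : RAAG G₀)
        simpa using this

/-- The isomorphism `ker ℓ₀ ≃* A_L *_{Γ_L} A_L`. -/
noncomputable def finalEquiv : ℓ₀.ker ≃* P ℓ where
  toFun := π ℓ hℓ ℓ₀ hℓ₀
  invFun := F' ℓ hℓ ℓ₀ hℓ₀
  left_inv := F'_π ℓ hℓ ℓ₀ hℓ₀
  right_inv := π_F' ℓ hℓ ℓ₀ hℓ₀
  map_mul' := map_mul _

end
end Stmt11Aux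


theorem stmt_11 (ℓ : A_L →* Multiplicative ℤ)
    (hℓ : ∀ i : Fin 4, ℓ (RAAG.gen L i) = Multiplicative.ofAdd 1)
    (ℓ₀ : RAAG G₀ →* Multiplicative ℤ)
    (hℓ₀ : ∀ i : Fin 6, ℓ₀ (RAAG.gen G₀ i) = Multiplicative.ofAdd 1) :
    Nonempty (ℓ₀.ker ≃* Monoid.PushoutI (fun _ : Bool => (ℓ.ker).subtype)) :=
  ⟨Stmt11Aux.finalEquiv ℓ hℓ ℓ₀ hℓ₀⟩
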